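/- For independent unit Fréchet X and Y, P( X/(ny-1) < Y < (nx-1)X ) = 1 - 1/(nx) - 1/(ny) whenever nx > 1 and ny > 1. -/

import Mathlib

open MeasureTheory ProbabilityTheory Real Set Filter

namespace FrechetStripAux

/-- Fréchet density (before truncation). -/
noncomputable def gR (c : ℝ) (s : ℝ) : ℝ := Real.exp (-c / s) / s ^ 2

/-- Antiderivative of `gR c`, extended by `0` on `(-∞,0]`. -/
noncomputable def G (c : ℝ) (s : ℝ) : ℝ := if 0 < s then Real.exp (-c / s) / c else 0

lemma gR_nonneg (c s : ℝ) : 0 ≤ gR c s := by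
  unfold gR; positivity

lemma gR_meas (c : ℝ) : Measurable (gR c) := by
  unfold gR; fun_prop

lemma hasDerivG {c s : ℝ} (hc : 0 < c) (hs : 0 < s) : HasDerivAt (G c) (gR c s) s := by
  have h1 : HasDerivAt (fun u : ℝ => -c / u) (c / s ^ 2) s := by
    simp only [div_eq_mul_inv]
    have h := (hasDerivAt_inv hs.ne').const_mul (-c)
    refine h.congr_deriv ?_
    ring
  have h2 : HasDerivAt (fun u : ℝ => Real.exp (-c / u) / c) (gR c s) s := by
    have := (h1.exp).div_const c
    refine this.congr_deriv ?_
    unfold gR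
    field_simp [Real.exp_ne_zero]
  have hev : (fun u : ℝ => Real.exp (-c / u) / c) =ᶠ[nhds s] G c := by
    filter_upwards [Ioi_mem_nhds hs] with u hu
    simp only [G]; rw [if_pos (mem_Ioi.mp hu)]
  exact h2.congr_of_eventuallyEq hev.symm

lemma tendstoG (c : ℝ) (hc : 0 < c) : Tendsto (G c) atTop (nhds (1 / c)) := by
  have h1 : Tendsto (fun u : ℝ => -c / u) atTop (nhds 0) :=
    Tendsto.div_atTop tendsto_const_nhds tendsto_id
  have h2 : Tendsto (fun u : ℝ => Real.exp (-c / u) / c) atTop (nhds (1 / c)) := by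
    have := (Real.continuous_exp.tendsto 0).comp h1
    simpa using this.div_const c
  refine h2.congr' ?_
  filter_upwards [Ioi_mem_atTop (0 : ℝ)] with u hu
  simp only [G]; rw [if_pos (mem_Ioi.mp hu)]

lemma contG0 (c : ℝ) (hc : 0 < c) : ContinuousWithinAt (G c) (Ici 0) 0 := by
  rw [← continuousWithinAt_Ioi_iff_Ici]
  have h0 : G c 0 = 0 := by simp [G]
  unfold ContinuousWithinAt
  rw [h0]
  have h1 : Tendsto (fun s : ℝ => -c / s) (nhdsWithin 0 (Ioi 0)) atBot := by
    have h2 : Tendsto (fun s : ℝ => c * s⁻¹) (nhdsWithin 0 (Ioi 0)) atTop :=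
      (tendsto_inv_nhdsGT_zero (𝕜 := ℝ)).const_mul_atTop hc
    have h3 := tendsto_neg_atTop_atBot.comp h2
    refine h3.congr fun s => ?_
    simp [Function.comp]; ring
  have h4 : Tendsto (fun s : ℝ => Real.exp (-c / s) / c) (nhdsWithin 0 (Ioi 0)) (nhds 0) := by
    have := (Real.tendsto_exp_atBot.comp h1).div_const c
    simpa using this
  refine h4.congr' ?_
  filter_upwards [self_mem_nhdsWithin] with u hu
  simp only [G]; rw [if_pos (mem_Ioi.mp hu)]


lemma intOn0 {c : ℝ} (hc : 0 < c) : IntegrableOn (gR c) (Ioi 0) :=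
  integrableOn_Ioi_deriv_of_nonneg (contG0 c hc) (fun s hs => hasDerivG hc hs)
    (fun s _ => gR_nonneg c s) (tendstoG c hc)

lemma int0 {c : ℝ} (hc : 0 < c) : ∫ s in Ioi 0, gR c s = 1 / c := by
  have := integral_Ioi_of_hasDerivAt_of_nonneg (contG0 c hc) (fun s hs => hasDerivG hc hs)
    (fun s _ => gR_nonneg c s) (tendstoG c hc)
  simpa [G] using this

lemma key0 {c : ℝ} (hc : 0 < c) :
    ∫⁻ s in Ioi 0, ENNReal.ofReal (gR c s) = ENNReal.ofReal (1 / c) := by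
  rw [← ofReal_integral_eq_lintegral_ofReal (intOn0 hc)
    (Eventually.of_forall fun s => gR_nonneg c s), int0 hc]

lemma keyx {x : ℝ} (hx : 0 < x) :
    ∫⁻ s in Ioi x, ENNReal.ofReal (gR 1 s) = ENNReal.ofReal (1 - Real.exp (-1 / x)) := by
  have hone : (0:ℝ) < 1 := one_pos
  have hcont : ContinuousWithinAt (G 1) (Ici x) x :=
    (hasDerivG hone hx).continuousAt.continuousWithinAt
  have hderiv : ∀ s ∈ Ioi x, HasDerivAt (G 1) (gR 1 s) s :=
    fun s hs => hasDerivG hone (hx.trans hs)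
  have hint := integrableOn_Ioi_deriv_of_nonneg hcont hderiv
    (fun s _ => gR_nonneg 1 s) (tendstoG 1 hone)
  have hval := integral_Ioi_of_hasDerivAt_of_nonneg hcont hderiv
    (fun s _ => gR_nonneg 1 s) (tendstoG 1 hone)
  rw [← ofReal_integral_eq_lintegral_ofReal hint
    (Eventually.of_forall fun s => gR_nonneg 1 s), hval]
  simp [G, hx]

/-- truncated density -/
noncomputable def d (s : ℝ) : ℝ := if 0 < s then gR 1 s else 0

lemma d_meas : Measurable d := by
  unfold d; exact Measurable.ite measurableSet_Ioi (gR_meas 1) measurable_const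

lemma d_nonneg (s : ℝ) : 0 ≤ d s := by unfold d; split <;> [exact gR_nonneg 1 s; rfl]

/-- the unit Fréchet measure -/
noncomputable def fm : Measure ℝ := volume.withDensity (fun s => ENNReal.ofReal (d s))

lemma fm_apply {A : Set ℝ} (hA : MeasurableSet A) :
    fm A = ∫⁻ s in A, ENNReal.ofReal (d s) := withDensity_apply _ hA

lemma fm_Iic_zero : fm (Iic 0) = 0 := by
  rw [fm_apply measurableSet_Iic]
  rw [setLIntegral_congr_fun (g := fun _ => 0) measurableSet_Iic
    (fun s (hs : s ∈ Iic 0) => by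
      simp [d, not_lt.mpr (mem_Iic.mp hs)])]
  simp

lemma fm_Ioi {w : ℝ} (hw : 0 < w) : fm (Ioi w) = ENNReal.ofReal (1 - Real.exp (-1 / w)) := by
  rw [fm_apply measurableSet_Ioi, setLIntegral_congr_fun
    (g := fun s => ENNReal.ofReal (gR 1 s)) measurableSet_Ioi
    (fun s (hs : s ∈ Ioi w) => by
      simp [d, hw.trans (mem_Ioi.mp hs)]), keyx hw]

lemma fm_univ : fm univ = 1 := by
  rw [fm_apply MeasurableSet.univ, Measure.restrict_univ,
    ← lintegral_add_compl _ (measurableSet_Ioi (a := (0:ℝ)))]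
  have h1 : ∫⁻ s in Ioi 0, ENNReal.ofReal (d s) = ENNReal.ofReal 1 := by
    rw [setLIntegral_congr_fun (g := fun s => ENNReal.ofReal (gR 1 s)) measurableSet_Ioi
      (fun s (hs : s ∈ Ioi 0) => by simp [d, mem_Ioi.mp hs])]
    simpa using key0 one_pos
  have h2 : ∫⁻ s in (Ioi (0:ℝ))ᶜ, ENNReal.ofReal (d s) = 0 := by
    rw [compl_Ioi, ← fm_apply measurableSet_Iic]
    exact fm_Iic_zero
  rw [h1, h2]
  simp

instance : IsProbabilityMeasure fm := ⟨fm_univ⟩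

lemma fm_Iic {w : ℝ} (hw : 0 < w) : fm (Iic w) = ENNReal.ofReal (Real.exp (-1 / w)) := by
  have h := measure_compl (μ := fm) measurableSet_Ioi (measure_ne_top _ (Ioi w))
  rw [compl_Ioi] at h
  rw [h, fm_univ, fm_Ioi hw, ← ENNReal.ofReal_one,
    ← ENNReal.ofReal_sub _ (by
      have h1 : Real.exp (-1 / w) ≤ 1 := by
        rw [← Real.exp_zero]
        exact Real.exp_le_exp.mpr (by rw [neg_div]; exact neg_nonpos.mpr (by positivity))
      linarith)]
  norm_num

lemma fm_Iio {w : ℝ} (hw : 0 < w) : fm (Iio w) = ENNReal.ofReal (Real.exp (-1 / w)) := by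
  rw [← Iic_diff_right, measure_diff_null (μ := fm)
    ((withDensity_absolutelyContinuous volume _) (Real.volume_singleton)), fm_Iic hw]

lemma fm_Ioo {u v : ℝ} (hu : 0 < u) (huv : u < v) :
    fm (Ioo u v) = ENNReal.ofReal (Real.exp (-1 / v)) - ENNReal.ofReal (Real.exp (-1 / u)) := by
  rw [← (show Iio v \ Iic u = Ioo u v by ext t; simp [and_comm]), measure_diff (Iic_subset_Iio.mpr huv) measurableSet_Iic.nullMeasurableSet
    (measure_ne_top _ _), fm_Iio (hu.trans huv), fm_Iic hu]


/-- `ψ k s = exp (-k/s)` as an `ℝ≥0∞`. -/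
noncomputable def psi (k s : ℝ) : ENNReal := ENNReal.ofReal (Real.exp (-k / s))

lemma psi_meas (k : ℝ) : Measurable (psi k) := by unfold psi; fun_prop

lemma psi_int {k : ℝ} (hk : 0 < k) : ∫⁻ s, psi k s ∂fm = ENNReal.ofReal (1 / (1 + k)) := by
  have h1k : (0:ℝ) < 1 + k := by linarith
  rw [fm, lintegral_withDensity_eq_lintegral_mul _ (d_meas.ennreal_ofReal) (psi_meas k),
    ← lintegral_add_compl _ (measurableSet_Ioi (a := (0:ℝ)))]
  have h1 : ∫⁻ s in Ioi 0, ((fun s => ENNReal.ofReal (d s)) * psi k) s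
      = ENNReal.ofReal (1 / (1 + k)) := by
    rw [setLIntegral_congr_fun (g := fun s => ENNReal.ofReal (gR (1 + k) s)) measurableSet_Ioi
      (fun s (hs : s ∈ Ioi 0) => ?_), key0 h1k]
    have hs0 : (0:ℝ) < s := mem_Ioi.mp hs
    simp only [Pi.mul_apply, psi, d, if_pos hs0, ← ENNReal.ofReal_mul (gR_nonneg 1 s)]
    congr 1
    unfold gR
    rw [div_mul_eq_mul_div, ← Real.exp_add]
    congr 2
    field_simp
    ring
  have h2 : ∫⁻ s in (Ioi (0:ℝ))ᶜ, ((fun s => ENNReal.ofReal (d s)) * psi k) s = 0 := by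
    rw [compl_Ioi, setLIntegral_congr_fun (g := fun _ => 0) measurableSet_Iic
      (fun s (hs : s ∈ Iic 0) => by
        simp [d, not_lt.mpr (mem_Iic.mp hs)])]
    simp
  rw [h1, h2, add_zero]

end FrechetStripAux

open FrechetStripAux

/-- For independent unit Fréchet `X` and `Y`,
`P(X/(ny-1) < Y < (nx-1)X) = 1 - 1/(nx) - 1/(ny)` whenever `nx > 1` and `ny > 1`. -/
theorem frechet_strip_probability {Ω : Type*} [MeasurableSpace Ω] (μ : Measure Ω)
    [IsProbabilityMeasure μ] (X Y : Ω → ℝ) (hX : Measurable X) (hY : Measurable Y)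
    (hXY : IndepFun X Y μ)
    (hXpos : ∀ᵐ ω ∂μ, 0 < X ω) (hYpos : ∀ᵐ ω ∂μ, 0 < Y ω)
    (hXF : ∀ x : ℝ, 0 < x → μ {ω | X ω ≤ x} = ENNReal.ofReal (exp (-1 / x)))
    (hYF : ∀ x : ℝ, 0 < x → μ {ω | Y ω ≤ x} = ENNReal.ofReal (exp (-1 / x)))
    (n : ℝ) (x y : ℝ) (hx : 0 < x) (hy : 0 < y)
    (hnx : 1 < n * x) (hny : 1 < n * y) :
    μ {ω | X ω / (n * y - 1) < Y ω ∧ Y ω < (n * x - 1) * X ω}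
      = ENNReal.ofReal (1 - 1 / (n * x) - 1 / (n * y)) := by
  have hA : (0:ℝ) < n * x - 1 := by linarith
  have hB : (0:ℝ) < n * y - 1 := by linarith
  have hnx0 : (0:ℝ) < n * x := by linarith
  have hny0 : (0:ℝ) < n * y := by linarith
  have hmap : ∀ (Z : Ω → ℝ), Measurable Z → (∀ᵐ ω ∂μ, 0 < Z ω) →
      (∀ t : ℝ, 0 < t → μ {ω | Z ω ≤ t} = ENNReal.ofReal (Real.exp (-1 / t))) →
      μ.map Z = fm := by
    intro Z hZ hZpos hZF
    have : IsProbabilityMeasure (μ.map Z) := Measure.isProbabilityMeasure_map hZ.aemeasurable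
    refine Measure.ext_of_Iic (μ.map Z) fm (fun t => ?_)
    rw [Measure.map_apply hZ measurableSet_Iic]
    rcases lt_or_ge 0 t with ht | ht
    · rw [fm_Iic ht, ← hZF t ht]; rfl
    · have h1 : μ (Z ⁻¹' Set.Iic t) = 0 := by
        refine measure_mono_null ?_ (ae_iff.mp hZpos)
        intro ω hω
        simp only [Set.mem_preimage, Set.mem_Iic] at hω
        simp only [Set.mem_setOf_eq, not_lt]
        exact hω.trans ht
      have h2 : fm (Set.Iic t) = 0 :=
        measure_mono_null (Set.Iic_subset_Iic.mpr ht) fm_Iic_zero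
      rw [h1, h2]
  have hmX := hmap X hX hXpos hXF
  have hmY := hmap Y hY hYpos hYF
  set S : Set (ℝ × ℝ) :=
    {p : ℝ × ℝ | p.1 / (n * y - 1) < p.2 ∧ p.2 < (n * x - 1) * p.1} with hS_def
  have hS : MeasurableSet S :=
    (measurableSet_lt (measurable_fst.div_const _) measurable_snd).inter
      (measurableSet_lt measurable_snd (measurable_fst.const_mul _))
  have hprod : μ.map (fun ω => (X ω, Y ω)) = fm.prod fm := by
    rw [(ProbabilityTheory.indepFun_iff_map_prod_eq_prod_map_map
      hX.aemeasurable hY.aemeasurable).mp hXY, hmX, hmY]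
  have hE : μ {ω | X ω / (n * y - 1) < Y ω ∧ Y ω < (n * x - 1) * X ω}
      = (fm.prod fm) S := by
    rw [← hprod, Measure.map_apply (hX.prodMk hY) hS]
    rfl
  rw [hE, Measure.prod_apply hS]
  have haeIoi : ∀ᵐ s ∂fm, s ∈ Set.Ioi (0:ℝ) := by
    rw [ae_iff]
    have hc : {s : ℝ | ¬ s ∈ Set.Ioi (0:ℝ)} = Set.Iic 0 := by ext s; simp
    rw [hc]; exact fm_Iic_zero
  rcases le_or_gt ((n*x-1)*(n*y-1)) 1 with hab | hab
  · -- degenerate case : the strip is empty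
    have hzero : ∀ᵐ s ∂fm, fm (Prod.mk s ⁻¹' S) = 0 := by
      filter_upwards [haeIoi] with s hs
      have hs0 : (0:ℝ) < s := hs
      have hempty : Prod.mk s ⁻¹' S = ∅ := by
        ext t
        simp only [hS_def, Set.mem_preimage, Set.mem_setOf_eq, Set.mem_empty_iff_false,
          iff_false, not_and, not_lt]
        intro h1
        have h5 : (n*x-1)*s ≤ s/(n*y-1) := by
          rw [le_div_iff₀ hB]; nlinarith
        linarith
      rw [hempty]; simp
    rw [lintegral_congr_ae hzero, lintegral_zero]
    symm
    rw [ENNReal.ofReal_eq_zero]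
    have key : 1 - 1/(n*x) - 1/(n*y) = ((n*x-1)*(n*y-1) - 1)/((n*x)*(n*y)) := by
      have hn : n ≠ 0 := by rintro rfl; linarith
      field_simp
      ring
    rw [key]
    exact div_nonpos_of_nonpos_of_nonneg (by linarith) (by positivity)
  · -- main case
    have hle : 1/(n*x-1) ≤ n*y-1 := by
      rw [div_le_iff₀ hA]; nlinarith
    have hslice : ∀ᵐ s ∂fm, fm (Prod.mk s ⁻¹' S)
        = psi (1/(n*x-1)) s - psi (n*y-1) s := by
      filter_upwards [haeIoi] with s hs
      have hs0 : (0:ℝ) < s := hs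
      have hPre : Prod.mk s ⁻¹' S = Set.Ioo (s/(n*y-1)) ((n*x-1)*s) := rfl
      have huv : s/(n*y-1) < (n*x-1)*s := by
        rw [div_lt_iff₀ hB]; nlinarith
      rw [hPre, fm_Ioo (by positivity) huv]
      unfold psi
      simp only [neg_div, div_div, one_div_div]
    rw [lintegral_congr_ae hslice]
    have hk1 : (0:ℝ) < 1/(n*x-1) := by positivity
    have hle' : ∀ᵐ s ∂fm, psi (n*y-1) s ≤ psi (1/(n*x-1)) s := by
      filter_upwards [haeIoi] with s hs
      have hs0 : (0:ℝ) < s := hs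
      unfold psi
      apply ENNReal.ofReal_le_ofReal
      apply Real.exp_le_exp.mpr
      have := (div_le_div_iff_of_pos_right hs0).mpr hle
      simp only [neg_div]
      linarith
    rw [lintegral_sub (psi_meas _)
      (by rw [psi_int hB]; exact ENNReal.ofReal_ne_top) hle',
      psi_int hk1, psi_int hB,
      ← ENNReal.ofReal_sub _ (by positivity)]
    congr 1
    have h1 : (1:ℝ) + 1/(n*x-1) ≠ 0 := by positivity
    have h2 : (1:ℝ) + (n*y-1) ≠ 0 := by linarith
    have hn : n ≠ 0 := by rintro rfl; linarith
    field_simp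
    ring
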